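/- Let A be a Conway semiring satisfying 1*·1* = 1*, 1*·a = a·1*, and 1*·(1*a)* = 1*·a* for all a. Equip the set 1*A = {1*a : a ∈ A} with addition and multiplication inherited from A, zero 0, unit 1*, and star operation (1*a)^⊗ = 1*·(1*a)* (which is well-defined). Then the map h : A → 1*A, a ↦ 1*·a, preserves 0, 1, addition, multiplication, and star (i.e., h(a*) = (h a)^⊗); and 1*A is a Conway semiring satisfying 1^⊗ = 1 (where 1 denotes the unit 1* of 1*A). -/
import Mathlib


/-- For a Conway semiring `A` satisfying `1*·1* = 1*`, `1*·a = a·1*` and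
`1*·(1*a)* = 1*·a*`, equip `1*A = {1*a : a ∈ A}` with inherited addition and
multiplication, zero `0`, unit `1*`, and star `(1*a)^⊗ = 1*·(1*a)*`.  Then the
star is well defined, the map `h : a ↦ 1*·a` preserves `0`, `1`, `+`, `·` and
star, and `1*A` is a Conway semiring satisfying `1^⊗ = 1` (its unit being
`1*`). -/
theorem stmt_13 {S : Type*} [Semiring S] (star : S → S)
    (hsum : ∀ a b : S, star (a + b) = star a * star (b * star a))
    (hprod : ∀ a b : S, star (a * b) = 1 + a * star (b * a) * b)
    (ax1 : star 1 * star 1 = star 1)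
    (ax2 : ∀ a : S, star 1 * a = a * star 1)
    (ax3 : ∀ a : S, star 1 * star (star 1 * a) = star 1 * star a) :
    -- the star operation on 1*A is well defined
    (∀ a b : S, star 1 * a = star 1 * b →
        star 1 * star (star 1 * a) = star 1 * star (star 1 * b)) ∧
    -- h preserves 0, 1, +, ·, and star
    (star 1 * (0 : S) = 0) ∧
    (star 1 * (1 : S) = star 1) ∧
    (∀ a b : S, star 1 * (a + b) = star 1 * a + star 1 * b) ∧
    (∀ a b : S, star 1 * (a * b) = (star 1 * a) * (star 1 * b)) ∧
    (∀ a : S, star 1 * star a = star 1 * star (star 1 * a)) ∧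
    -- the Conway identities in 1*A (with unit 1* and star x^⊗ = 1*·x*)
    (∀ x ∈ Set.range (fun a : S => star 1 * a),
      ∀ y ∈ Set.range (fun a : S => star 1 * a),
        star 1 * star (x + y) =
          (star 1 * star x) * (star 1 * star (y * (star 1 * star x)))) ∧
    (∀ x ∈ Set.range (fun a : S => star 1 * a),
      ∀ y ∈ Set.range (fun a : S => star 1 * a),
        star 1 * star (x * y) = star 1 + x * (star 1 * star (y * x)) * y) ∧
    -- 1^⊗ = 1 in 1*A
    (star 1 * star (star 1) = star 1) := by
  have L1 : ∀ t : S, star 1 * (star 1 * t) = star 1 * t := by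
    intro t; rw [← mul_assoc, ax1]
  have sw : ∀ a b : S, star 1 * (a * b) = a * (star 1 * b) := by
    intro a b; rw [← mul_assoc, ax2 a, mul_assoc]
  have hmul : ∀ a b : S, star 1 * (a * b) = (star 1 * a) * (star 1 * b) := by
    intro a b
    rw [← L1 (a * b), sw a b, ← mul_assoc]
  have key : ∀ b u : S, star 1 * star ((star 1 * b) * (star 1 * u)) =
      star 1 * star ((star 1 * b) * u) := by
    intro b u
    rw [← sw (star 1 * b) u, ax3]
  refine ⟨fun a b h => by rw [h], mul_zero _, mul_one _, fun a b => mul_add _ _ _,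
    hmul, fun a => (ax3 a).symm, ?_, ?_, ?_⟩
  · rintro x ⟨a, rfl⟩ y ⟨b, rfl⟩
    simp only []
    rw [hsum, hmul, key]
  · rintro x ⟨a, rfl⟩ y ⟨b, rfl⟩
    simp only []
    rw [hprod, mul_add, mul_one]
    congr 1
    rw [hmul, hmul, L1, L1]
  · calc star 1 * star (star 1) = star 1 * star (star 1 * 1) := by rw [mul_one]
    _ = star 1 * star 1 := ax3 1
    _ = star 1 := ax1
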